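/- Let X be a weak Cook continuum, P a subcontinuum of X, and f : P → X a non-constant continuous map. Then f(P) ⊆ P and f is a monotone retraction of P (f restricted to f(P) is the identity and all fibers of f are subcontinua). -/

import Mathlib

open Set Topology

variable {X Y : Type*} [TopologicalSpace X] [TopologicalSpace Y]

/-- A map is fully closed if images of disjoint closed sets meet in a discrete subspace. -/
def IsFullyClosedMap (f : X → Y) : Prop :=
  ∀ F G : Set X, IsClosed F → IsClosed G → Disjoint F G →
    DiscreteTopology ↥(f '' F ∩ f '' G)

/-- A map is ring-like if every neighborhood pair admits a smaller neighborhood of the image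
point whose frontier has preimage inside the given neighborhood of the point. -/
def IsRingLike (f : X → Y) : Prop :=
  ∀ x : X, ∀ U : Set X, ∀ V : Set Y, IsOpen U → x ∈ U → IsOpen V → f x ∈ V →
    ∃ V' : Set Y, IsOpen V' ∧ f x ∈ V' ∧ V' ⊆ V ∧ f ⁻¹' (frontier V') ⊆ U

/-- A subcontinuum: a compact connected subset. -/
def IsSubcontinuum (A : Set X) : Prop := IsCompact A ∧ IsConnected A

/-- A terminal subcontinuum. -/
def IsTerminalSubcontinuum (A : Set X) : Prop :=
  IsSubcontinuum A ∧ ∀ B : Set X, IsSubcontinuum B → A ∩ B = ∅ ∨ A ⊆ B ∨ B ⊆ A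

/-- An atomic map: point-inverses (of points in the range) are terminal subcontinua. -/
def IsAtomicMap (f : X → Y) : Prop :=
  ∀ y ∈ Set.range f, IsTerminalSubcontinuum (f ⁻¹' {y})

/-- `L` is a partition in `X` between `A` and `B`. -/
def IsPartitionBetween (L A B : Set X) : Prop :=
  IsClosed L ∧ ∃ U V : Set X, IsOpen U ∧ IsOpen V ∧ Disjoint U V ∧
    Lᶜ = U ∪ V ∧ A ⊆ U ∧ B ⊆ V

/-- Covering dimension at most `n`. -/
def CovDimLE (X : Type*) [TopologicalSpace X] (n : ℕ) : Prop :=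
  ∀ (k : ℕ) (U : Fin k → Set X), (∀ i, IsOpen (U i)) → (⋃ i, U i) = Set.univ →
    ∃ (m : ℕ) (V : Fin m → Set X), (∀ j, IsOpen (V j)) ∧ (⋃ j, V j) = Set.univ ∧
      (∀ j, ∃ i, V j ⊆ U i) ∧ ∀ x : X, Set.ncard {j | x ∈ V j} ≤ n + 1

/-- `IndLE n X` means the small inductive dimension of `X` is at most `n - 1`;
in particular `IndLE 0 X` means `X` is empty. -/
def IndLE : ℕ → (X : Type u) → [TopologicalSpace X] → Prop
  | 0, X, _ => IsEmpty X
  | n+1, X, _ => ∀ (x : X) (V : Set X), IsOpen V → x ∈ V →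
      ∃ U : Set X, IsOpen U ∧ x ∈ U ∧ U ⊆ V ∧ IndLE n ↥(frontier U)


lemma aux_clopen_sep {α : Type*} [TopologicalSpace α] [CompactSpace α] [T2Space α]
    (x : α) {U : Set α} (hU : IsOpen U) (h : connectedComponent x ⊆ U) :
    ∃ Z : Set α, IsClopen Z ∧ x ∈ Z ∧ Z ⊆ U := by
  have hI := connectedComponent_eq_iInter_isClopen x
  have hcomp : IsCompact Uᶜ := hU.isClosed_compl.isCompact
  have hempty : (Uᶜ ∩ ⋂ s : { s : Set α // IsClopen s ∧ x ∈ s }, (s : Set α)) = ∅ := by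
    rw [← hI, eq_empty_iff_forall_notMem]
    rintro y ⟨hy1, hy2⟩
    exact hy1 (h hy2)
  obtain ⟨t, ht⟩ := hcomp.elim_finite_subfamily_closed _ (fun s => s.2.1.1) hempty
  refine ⟨⋂ s ∈ t, (s : Set α), isClopen_biInter_finset (fun s _ => s.2.1), ?_, ?_⟩
  · exact mem_iInter₂.mpr fun s _ => s.2.2
  · intro z hz
    by_contra hzU
    exact (eq_empty_iff_forall_notMem.mp ht z) ⟨hzU, hz⟩

lemma aux_bump {α : Type*} [TopologicalSpace α] [CompactSpace α] [T2Space α] [PreconnectedSpace α]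
    {W : Set α} (hW : IsClosed W) (hWne : W ≠ univ) {p : α} (hp : p ∈ W) :
    (connectedComponentIn W p ∩ closure Wᶜ).Nonempty := by
  by_contra hemp
  rw [not_nonempty_iff_eq_empty, eq_empty_iff_forall_notMem] at hemp
  have hsub : connectedComponentIn W p ⊆ interior W := by
    intro q hq
    by_contra hqi
    exact hemp q ⟨hq, by rwa [← compl_compl (interior W), ← closure_compl, mem_compl_iff,
      not_not] at hqi⟩
  haveI : CompactSpace ↥W := isCompact_iff_compactSpace.mp hW.isCompact
  set p' : ↥W := ⟨p, hp⟩
  have hcc : connectedComponent p' ⊆ (Subtype.val ⁻¹' interior W : Set ↥W) := by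
    intro q hq
    refine hsub ?_
    rw [connectedComponentIn_eq_image hp]
    exact mem_image_of_mem _ hq
  obtain ⟨Z, hZ, hpZ, hZU⟩ := aux_clopen_sep p' (isOpen_interior.preimage continuous_subtype_val) hcc
  set C : Set α := Subtype.val '' Z with hC
  obtain ⟨G, hG, hGZ⟩ := isOpen_induced_iff.mp hZ.2
  have hCeq : C = G ∩ interior W := by
    ext c
    constructor
    · rintro ⟨z, hz, rfl⟩
      exact ⟨by rw [← hGZ] at hz; exact hz, hZU hz⟩
    · rintro ⟨hcG, hci⟩
      have hcW : c ∈ W := interior_subset hci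
      exact ⟨⟨c, hcW⟩, by rw [← hGZ]; exact hcG, rfl⟩
  have hCclopen : IsClopen C := by
    constructor
    · exact ((hZ.1.isCompact).image continuous_subtype_val).isClosed
    · rw [hCeq]; exact hG.inter isOpen_interior
  have hCuniv : C = univ := hCclopen.eq_univ ⟨p, ⟨p', hpZ, rfl⟩⟩
  apply hWne
  rw [eq_univ_iff_forall]
  intro y
  have : y ∈ C := hCuniv ▸ mem_univ y
  obtain ⟨z, _, rfl⟩ := this
  exact z.2

lemma aux_main {X : Type*} [TopologicalSpace X] [CompactSpace X] [T2Space X]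
    (hwc : ∀ P : Set X, (IsCompact P ∧ IsConnected P) → ∀ g : ↥P → X, Continuous g →
      P ∩ Set.range g = ∅ → ∃ c : X, ∀ p : ↥P, g p = c)
    (P : Set X) (hP : IsCompact P ∧ IsConnected P)
    (f : ↥P → X) (hf : Continuous f) (hnc : ¬ ∃ c : X, ∀ p : ↥P, f p = c) (p : ↥P) :
    ∃ h : f p ∈ P, (⟨f p, h⟩ : ↥P) ∈ connectedComponentIn {q : ↥P | f q = f p} p := by
  haveI : CompactSpace ↥P := isCompact_iff_compactSpace.mp hP.1
  haveI : ConnectedSpace ↥P := Subtype.connectedSpace hP.2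
  set x := f p with hx
  set F : Set ↥P := {q : ↥P | f q = x} with hFdef
  have hFclosed : IsClosed F := isClosed_eq hf continuous_const
  have hpF : p ∈ F := rfl
  by_contra hcon
  push_neg at hcon
  -- Build a relatively clopen piece S of the fiber F around p avoiding x
  obtain ⟨S, hSsub, hScomp, hpS, hxS, hCS⟩ :
      ∃ S : Set ↥P, S ⊆ F ∧ IsCompact S ∧ p ∈ S ∧ (∀ q ∈ S, (q : X) ≠ x) ∧
        connectedComponentIn F p ⊆ S := by
    by_cases hxP : ∃ h : x ∈ P, (⟨x, h⟩ : ↥P) ∈ F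
    · obtain ⟨hxP, hxF⟩ := hxP
      haveI : CompactSpace ↥F := isCompact_iff_compactSpace.mp hFclosed.isCompact
      set pF : ↥F := ⟨p, hpF⟩
      set xF : ↥F := ⟨⟨x, hxP⟩, hxF⟩
      have hne : connectedComponent pF ⊆ ({xF}ᶜ : Set ↥F) := by
        intro q hq
        simp only [mem_compl_iff, mem_singleton_iff]
        rintro rfl
        exact hcon hxP (by rw [connectedComponentIn_eq_image hpF]; exact ⟨xF, hq, rfl⟩)
      obtain ⟨Z, hZ, hpZ, hZsub⟩ := aux_clopen_sep pF isClosed_singleton.isOpen_compl hne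
      refine ⟨Subtype.val '' Z, ?_, ?_, ⟨pF, hpZ, rfl⟩, ?_, ?_⟩
      · rintro _ ⟨z, _, rfl⟩; exact z.2
      · exact (hZ.1.isCompact).image continuous_subtype_val
      · rintro _ ⟨z, hz, rfl⟩ h
        exact hZsub hz (by simp only [mem_singleton_iff]; exact Subtype.ext (Subtype.ext h))
      · rw [connectedComponentIn_eq_image hpF]
        exact image_mono (hZ.connectedComponent_subset hpZ)
    · refine ⟨F, subset_rfl, hFclosed.isCompact, hpF, ?_, connectedComponentIn_subset _ _⟩
      intro q hq hq'
      apply hxP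
      have hxP' : x ∈ P := hq' ▸ q.2
      refine ⟨hxP', ?_⟩
      have hq2 : (⟨x, hxP'⟩ : ↥P) = q := Subtype.ext hq'.symm
      rw [hq2]; exact hq
  -- Separate S from x in X
  set S' : Set X := Subtype.val '' S with hS'def
  have hS'comp : IsCompact S' := hScomp.image continuous_subtype_val
  have hxS' : x ∉ S' := by rintro ⟨q, hq, hq'⟩; exact hxS q hq hq'
  obtain ⟨O, O₂, hO, hO₂, hSO, hxO₂, hOO₂⟩ :=
    SeparatedNhds.of_isCompact_isCompact hS'comp isCompact_singleton
      (disjoint_singleton_right.mpr hxS')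
  have hxclO : x ∉ closure O := fun h =>
    disjoint_left.mp (hOO₂.closure_left hO₂) h (hxO₂ rfl)
  obtain ⟨V, O₃, hV, hO₃, hxV, hclOO₃, hVO₃⟩ :=
    SeparatedNhds.of_isCompact_isCompact isCompact_singleton isClosed_closure.isCompact
      (disjoint_singleton_left.mpr hxclO)
  have hVO : Disjoint (closure V) (closure O) :=
    (hVO₃.closure_left hO₃).mono_right hclOO₃
  -- The closed set W
  set W : Set ↥P := (fun q : ↥P => (q : X)) ⁻¹' closure O ∩ f ⁻¹' closure V with hWdef
  have hWclosed : IsClosed W :=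
    (isClosed_closure.preimage continuous_subtype_val).inter (isClosed_closure.preimage hf)
  have hpW : p ∈ W :=
    ⟨subset_closure (hSO ⟨p, hpS, rfl⟩), subset_closure (by rw [← hx]; exact hxV rfl)⟩
  have hWne : W ≠ univ := by
    intro hWu
    apply hnc
    apply hwc P hP f hf
    rw [eq_empty_iff_forall_notMem]
    rintro y ⟨hyP, q, rfl⟩
    have h1 : f q ∈ closure V := ((hWu ▸ mem_univ q : q ∈ W)).2
    have h2 : (⟨f q, hyP⟩ : ↥P) ∈ W := hWu ▸ mem_univ _
    exact disjoint_left.mp hVO h1 h2.1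
  -- The component K of p in W
  set K : Set ↥P := connectedComponentIn W p with hKdef
  have hKW : K ⊆ W := connectedComponentIn_subset _ _
  have hpK : p ∈ K := mem_connectedComponentIn hpW
  have hKcomp : IsCompact K := by
    haveI : CompactSpace ↥W := isCompact_iff_compactSpace.mp hWclosed.isCompact
    rw [hKdef, connectedComponentIn_eq_image hpW]
    exact isClosed_connectedComponent.isCompact.image continuous_subtype_val
  have hKconn : IsPreconnected K := isPreconnected_connectedComponentIn
  set K' : Set X := Subtype.val '' K with hK'def
  have hK'P : ∀ y : X, y ∈ K' → y ∈ P := by rintro _ ⟨q, _, rfl⟩; exact q.2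
  have hK'sub : IsCompact K' ∧ IsConnected K' :=
    ⟨hKcomp.image continuous_subtype_val,
      ⟨⟨↑p, mem_image_of_mem _ hpK⟩, hKconn.image _ continuous_subtype_val.continuousOn⟩⟩
  set g : ↥K' → X := fun y => f ⟨y.1, hK'P y.1 y.2⟩ with hgdef
  have hgc : Continuous g := hf.comp (Continuous.subtype_mk continuous_subtype_val _)
  have hdisj : K' ∩ Set.range g = ∅ := by
    rw [eq_empty_iff_forall_notMem]
    rintro y ⟨hyK', z, rfl⟩
    obtain ⟨q, hqK, hqz⟩ := z.2
    have hgz : g z = f q := by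
      simp only [hgdef]
      congr 1
      exact Subtype.ext hqz.symm
    have h1 : g z ∈ closure V := by rw [hgz]; exact (hKW hqK).2
    obtain ⟨r, hrK, hry⟩ := hyK'
    have h2 : (r : X) ∈ closure O := (hKW hrK).1
    rw [hry] at h2
    exact disjoint_left.mp hVO h1 h2
  obtain ⟨c, hc⟩ := hwc K' hK'sub g hgc hdisj
  have hKF : ∀ q ∈ K, f q = x := by
    have hcx : c = x := by
      have h1 := hc ⟨↑p, mem_image_of_mem _ hpK⟩
      have h2 : g ⟨↑p, mem_image_of_mem _ hpK⟩ = f p := by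
        simp only [hgdef]
      rw [← h1, h2, hx]
    intro q hq
    have h1 := hc ⟨↑q, mem_image_of_mem _ hq⟩
    have h2 : g ⟨↑q, mem_image_of_mem _ hq⟩ = f q := by
      simp only [hgdef]
    rw [← h2, h1, hcx]
  -- K is contained in S, hence in O
  have hKS : K ⊆ S := (hKconn.subset_connectedComponentIn hpK (fun q hq => hKF q hq)).trans hCS
  -- boundary bumping gives the contradiction
  obtain ⟨b, hbK, hbcl⟩ := aux_bump hWclosed hWne hpW
  have hbO : (b : X) ∈ O := hSO ⟨b, hKS hbK, rfl⟩
  have hbV : f b ∈ V := by rw [hKF b hbK]; exact hxV rfl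
  have hNopen : IsOpen ((fun q : ↥P => (q : X)) ⁻¹' O ∩ f ⁻¹' V) :=
    (hO.preimage continuous_subtype_val).inter (hV.preimage hf)
  rw [mem_closure_iff] at hbcl
  obtain ⟨z, hzN, hzW⟩ := hbcl _ hNopen ⟨hbO, hbV⟩
  exact hzW ⟨subset_closure hzN.1, subset_closure hzN.2⟩

theorem statement15 {X : Type*} [TopologicalSpace X]
    [CompactSpace X] [T2Space X] [ConnectedSpace X] [Nontrivial X]
    (hwc : ∀ P : Set X, IsSubcontinuum P → ∀ g : ↥P → X, Continuous g →
      P ∩ Set.range g = ∅ → ∃ c : X, ∀ p : ↥P, g p = c)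
    (P : Set X) (hP : IsSubcontinuum P)
    (f : ↥P → X) (hf : Continuous f) (hnc : ¬ ∃ c : X, ∀ p : ↥P, f p = c) :
    Set.range f ⊆ P ∧ (∀ p : ↥P, (p : X) ∈ Set.range f → f p = (p : X)) ∧
      ∀ x ∈ Set.range f, IsConnected {p : ↥P | f p = x} := by
  have hmain := aux_main hwc P hP f hf hnc
  refine ⟨?_, ?_, ?_⟩
  · rintro _ ⟨q, rfl⟩
    exact (hmain q).1
  · intro p hp
    obtain ⟨q, hq⟩ := hp
    obtain ⟨h, hmem⟩ := hmain q
    have h1' : (⟨f q, h⟩ : ↥P) ∈ {r : ↥P | f r = f q} := connectedComponentIn_subset _ _ hmem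
    have h1 : f (⟨f q, h⟩ : ↥P) = f q := h1'
    have h2 : (⟨f q, h⟩ : ↥P) = p := Subtype.ext hq
    rw [← h2, h1]
  · rintro _ ⟨p₀, rfl⟩
    obtain ⟨h₀, hmem₀⟩ := hmain p₀
    have hx0 : (⟨f p₀, h₀⟩ : ↥P) ∈ {p : ↥P | f p = f p₀} :=
      connectedComponentIn_subset {p : ↥P | f p = f p₀} p₀ hmem₀
    refine ⟨⟨p₀, rfl⟩, ?_⟩
    apply isPreconnected_of_forall (⟨f p₀, h₀⟩ : ↥P)
    intro y hy
    obtain ⟨hy', hmemy⟩ := hmain y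
    have hyx : f y = f p₀ := hy
    have hsets : {q : ↥P | f q = f y} = {q : ↥P | f q = f p₀} := by
      ext q; simp only [mem_setOf_eq, hyx]
    have hpt : (⟨f y, hy'⟩ : ↥P) = (⟨f p₀, h₀⟩ : ↥P) := Subtype.ext hyx
    rw [hsets, hpt] at hmemy
    exact ⟨connectedComponentIn {q : ↥P | f q = f p₀} y,
      connectedComponentIn_subset _ _, hmemy, mem_connectedComponentIn hy,
      isPreconnected_connectedComponentIn⟩
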